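/- Let T(v₁) and T(v₂) be rooted trees of equal height h, and let d_φ(T(v₁),T(v₂)) = ‖φ(T(v₁),𝒰) − φ(T(v₂),𝒰)‖₁ be the L₁ distance between their Bag-of-Complete-Subtree vectors. Then the true tree edit distance d_TED satisfies d_φ(T(v₁),T(v₂))/(2h+2) ≤ d_TED(T(v₁),T(v₂)) ≤ d_φ(T(v₁),T(v₂)). -/

import Mathlib

inductive LTree : Type
  | node : ℕ → List LTree → LTree

namespace LTree

inductive Iso : LTree → LTree → Prop
  | node {a : ℕ} {cs ds ds' : List LTree} :
      ds.Perm ds' → List.Forall₂ Iso cs ds' → Iso (.node a cs) (.node a ds)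

def nodeCount : LTree → ℕ
  | node _ cs => 1 + (cs.attach.map (fun c => nodeCount c.1)).sum
decreasing_by have := List.sizeOf_lt_of_mem c.2; simp only [LTree.node.sizeOf_spec]; omega

def leafCount : LTree → ℕ
  | node _ [] => 1
  | node _ (c :: cs) => ((c :: cs).attach.map (fun x => leafCount x.1)).sum
decreasing_by have := List.sizeOf_lt_of_mem x.2; simp only [LTree.node.sizeOf_spec]; omega

def height : LTree → ℕ
  | node _ cs => (cs.attach.map (fun c => height c.1 + 1)).foldr max 0
decreasing_by have := List.sizeOf_lt_of_mem c.2; simp only [LTree.node.sizeOf_spec]; omega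

def edgeCount : LTree → ℕ
  | node _ cs => cs.length + (cs.attach.map (fun c => edgeCount c.1)).sum
decreasing_by have := List.sizeOf_lt_of_mem c.2; simp only [LTree.node.sizeOf_spec]; omega

def subtrees : LTree → Multiset LTree
  | node a cs => node a cs ::ₘ ((cs.attach.map (fun c => subtrees c.1)).sum : Multiset LTree)
decreasing_by have := List.sizeOf_lt_of_mem c.2; simp only [LTree.node.sizeOf_spec]; omega

def code : LTree → ℕ
  | node a cs => Nat.pair a (Encodable.encode ((cs.attach.map (fun c => code c.1)).mergeSort (· ≤ ·)))
decreasing_by have := List.sizeOf_lt_of_mem c.2; simp only [LTree.node.sizeOf_spec]; omega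

inductive Balanced : ℕ → LTree → Prop
  | leaf (a : ℕ) : Balanced 0 (.node a [])
  | node {a : ℕ} {cs : List LTree} {n : ℕ} :
      cs ≠ [] → (∀ c ∈ cs, Balanced n c) → Balanced (n + 1) (.node a cs)

def labelSet : LTree → Multiset ℕ
  | node a cs => a ::ₘ ((cs.attach.map (fun c => labelSet c.1)).sum : Multiset ℕ)
decreasing_by have := List.sizeOf_lt_of_mem c.2; simp only [LTree.node.sizeOf_spec]; omega

end LTree

namespace LTree

/-- One tree edit operation: relabel a node, delete a (non-root) node
(promoting its children), or insert a node. `congr` lets an edit happen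
anywhere in the tree. -/
inductive EditStep : LTree → LTree → Prop
  | relabel (a b : ℕ) (cs : List LTree) : EditStep (.node a cs) (.node b cs)
  | delete (a b : ℕ) (pre post ds : List LTree) :
      EditStep (.node a (pre ++ .node b ds :: post)) (.node a (pre ++ ds ++ post))
  | insert (a b : ℕ) (pre post ds : List LTree) :
      EditStep (.node a (pre ++ ds ++ post)) (.node a (pre ++ .node b ds :: post))
  | congr (a : ℕ) (pre post : List LTree) (t t' : LTree) :
      EditStep t t' → EditStep (.node a (pre ++ t :: post)) (.node a (pre ++ t' :: post))

/-- `Edits n t t'`: `t` can be transformed into (a tree isomorphic to) `t'`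
by `n` edit operations, reordering children freely (unordered trees). -/
inductive Edits : ℕ → LTree → LTree → Prop
  | iso {t t'} : Iso t t' → Edits 0 t t'
  | step {n t s s' t'} : Iso t s → EditStep s s' → Edits n s' t' → Edits (n + 1) t t'

/-- Tree edit distance between unordered labeled rooted trees. -/
noncomputable def dTED (t t' : LTree) : ℕ := sInf {n | Edits n t t'}

/-- Bag of complete subtrees: the multiset of (canonical codes of) all
complete subtrees of `T`. -/
def bocs (T : LTree) : Multiset ℕ := (subtrees T).map code

/-- `L₁`-approximated tree edit distance: the `L₁` distance between the
Bag-of-Complete-Subtree count vectors. -/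
def dphi (T T' : LTree) : ℕ :=
  ∑ c ∈ (bocs T + bocs T').toFinset,
    (((bocs T).count c - (bocs T').count c) + ((bocs T').count c - (bocs T).count c))

end LTree

namespace LTree

/-! ### Basic unfoldings -/

theorem subtrees_node (a : ℕ) (cs : List LTree) :
    subtrees (node a cs) = node a cs ::ₘ (cs.map subtrees).sum := by
  rw [subtrees, List.attach_map_val]

theorem nodeCount_node (a : ℕ) (cs : List LTree) :
    nodeCount (node a cs) = 1 + (cs.map nodeCount).sum := by
  rw [nodeCount, List.attach_map_val]

theorem height_node (a : ℕ) (cs : List LTree) :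
    height (node a cs) = (cs.map (fun c => height c + 1)).foldr max 0 := by
  rw [height]
  exact congrArg (List.foldr max 0) (List.attach_map_val (l := cs) (f := fun c => height c + 1))

theorem code_node (a : ℕ) (cs : List LTree) :
    code (node a cs) = Nat.pair a (Encodable.encode ((cs.map code).mergeSort (· ≤ ·))) := by
  rw [code, List.attach_map_val]

/-! ### induction principle -/

theorem ind {P : LTree → Prop} (h : ∀ a cs, (∀ c ∈ cs, P c) → P (node a cs)) : ∀ t, P t
  | node a cs => h a cs (fun c hc => ind h c)
decreasing_by have := List.sizeOf_lt_of_mem hc; simp only [LTree.node.sizeOf_spec]; omega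

theorem le_foldr_max (l : List ℕ) : ∀ x ∈ l, x ≤ l.foldr max 0 := by
  induction l with
  | nil => simp
  | cons a l ih =>
    intro x hx
    rcases List.mem_cons.1 hx with rfl | hx
    · simp only [List.foldr_cons]; omega
    · have := ih x hx; simp only [List.foldr_cons]; omega

theorem height_lt_of_mem {c : LTree} {a : ℕ} {cs : List LTree} (hc : c ∈ cs) :
    height c < height (node a cs) := by
  rw [height_node]
  have := le_foldr_max (cs.map (fun c => height c + 1)) (height c + 1)
    (List.mem_map_of_mem hc)
  omega

theorem nodeCount_pos (t : LTree) : 0 < nodeCount t := by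
  cases t with | node a cs => rw [nodeCount_node]; omega

theorem nodeCount_lt_of_mem {c : LTree} {a : ℕ} {cs : List LTree} (hc : c ∈ cs) :
    nodeCount c < nodeCount (node a cs) := by
  rw [nodeCount_node]
  have : nodeCount c ≤ (cs.map nodeCount).sum := List.single_le_sum (by simp) _
    (List.mem_map_of_mem hc)
  omega

/-! ### subtrees membership -/

/-- forest of subtrees -/
def subM (F : Multiset LTree) : Multiset LTree := (F.map subtrees).sum

theorem subM_coe (cs : List LTree) : subM ↑cs = (cs.map subtrees).sum := by
  rw [subM, Multiset.map_coe, Multiset.sum_coe]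

theorem subtrees_node' (a : ℕ) (cs : List LTree) :
    subtrees (node a cs) = node a cs ::ₘ subM ↑cs := by
  rw [subtrees_node, subM_coe]

theorem subM_cons (t : LTree) (F : Multiset LTree) :
    subM (t ::ₘ F) = subtrees t + subM F := by
  simp [subM]

theorem subM_add (F G : Multiset LTree) : subM (F + G) = subM F + subM G := by
  simp [subM]

theorem subM_zero : subM 0 = 0 := rfl

theorem mem_subM {x : LTree} {F : Multiset LTree} :
    x ∈ subM F ↔ ∃ t ∈ F, x ∈ subtrees t := by
  constructor
  · intro hx
    rcases Multiset.mem_join.1 hx with ⟨s, hs, hxs⟩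
    rcases Multiset.mem_map.1 hs with ⟨t, ht, rfl⟩
    exact ⟨t, ht, hxs⟩
  · rintro ⟨t, ht, hxt⟩
    exact Multiset.mem_join.2 ⟨subtrees t, Multiset.mem_map_of_mem _ ht, hxt⟩

theorem self_mem_subtrees (t : LTree) : t ∈ subtrees t := by
  cases t with | node a cs => rw [subtrees_node']; exact Multiset.mem_cons_self _ _

theorem height_le_of_mem_subtrees : ∀ t : LTree, ∀ s ∈ subtrees t, height s ≤ height t := by
  intro t
  induction t using ind with
  | h a cs ih =>
    intro s hs
    rw [subtrees_node'] at hs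
    rcases Multiset.mem_cons.1 hs with rfl | hs
    · exact le_rfl
    · rcases mem_subM.1 hs with ⟨c, hc, hsc⟩
      exact le_trans (ih c hc s hsc) (le_of_lt (height_lt_of_mem hc))

theorem nodeCount_le_of_mem_subtrees : ∀ t : LTree, ∀ s ∈ subtrees t, nodeCount s ≤ nodeCount t := by
  intro t
  induction t using ind with
  | h a cs ih =>
    intro s hs
    rw [subtrees_node'] at hs
    rcases Multiset.mem_cons.1 hs with rfl | hs
    · exact le_rfl
    · rcases mem_subM.1 hs with ⟨c, hc, hsc⟩
      exact le_trans (ih c hc s hsc) (le_of_lt (nodeCount_lt_of_mem hc))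

theorem card_list_sum (l : List (Multiset LTree)) :
    Multiset.card l.sum = (l.map Multiset.card).sum := by
  induction l <;> simp [*]

theorem card_subtrees : ∀ t : LTree, Multiset.card (subtrees t) = nodeCount t := by
  intro t
  induction t using ind with
  | h a cs ih =>
    rw [subtrees_node, nodeCount_node, Multiset.card_cons, card_list_sum]
    have hmap : (cs.map subtrees).map Multiset.card = cs.map nodeCount := by
      rw [List.map_map]; exact List.map_congr_left (fun c hc => ih c hc)
    rw [hmap]; omega

end LTree
namespace LTree

/-! ### Iso machinery -/

theorem rel_of_forall₂ {R : LTree → LTree → Prop} :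
    ∀ {l₁ l₂ : List LTree}, List.Forall₂ R l₁ l₂ → Multiset.Rel R ↑l₁ ↑l₂ := by
  intro l₁ l₂ h
  induction h with
  | nil => exact Multiset.Rel.zero
  | cons h _ ih => rw [← Multiset.cons_coe, ← Multiset.cons_coe]; exact Multiset.Rel.cons h ih

theorem forall₂_of_rel {R : LTree → LTree → Prop} :
    ∀ {l₁ : List LTree} {m : Multiset LTree}, Multiset.Rel R ↑l₁ m →
      ∃ l₂ : List LTree, m = ↑l₂ ∧ List.Forall₂ R l₁ l₂ := by
  intro l₁
  induction l₁ with
  | nil =>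
    intro m h
    rw [Multiset.coe_nil] at h
    exact ⟨[], by simpa using (Multiset.rel_zero_left.1 h), List.Forall₂.nil⟩
  | cons a l ih =>
    intro m h
    rw [← Multiset.cons_coe] at h
    rcases Multiset.rel_cons_left.1 h with ⟨b, bs, hab, hrel, rfl⟩
    rcases ih hrel with ⟨l₂, rfl, hf⟩
    exact ⟨b :: l₂, by rw [Multiset.cons_coe], List.Forall₂.cons hab hf⟩

theorem iso_node_iff {a b : ℕ} {cs ds : List LTree} :
    Iso (node a cs) (node b ds) ↔ a = b ∧ Multiset.Rel Iso ↑cs ↑ds := by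
  constructor
  · intro h
    cases h with
    | node hperm hf =>
      refine ⟨rfl, ?_⟩
      have := rel_of_forall₂ hf
      rwa [Multiset.coe_eq_coe.2 hperm.symm] at this
  · rintro ⟨rfl, hrel⟩
    rcases forall₂_of_rel hrel with ⟨l₂, hl₂, hf⟩
    exact Iso.node (Multiset.coe_eq_coe.1 hl₂) hf

theorem rel_refl_of_mem {α : Type*} {R : α → α → Prop} {m : Multiset α}
    (h : ∀ x ∈ m, R x x) : Multiset.Rel R m m := by
  induction m using Multiset.induction with
  | empty => exact Multiset.Rel.zero
  | cons a s ih =>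
    exact Multiset.Rel.cons (h a (Multiset.mem_cons_self _ _))
      (ih (fun x hx => h x (Multiset.mem_cons_of_mem hx)))

theorem Iso.refl : ∀ t : LTree, Iso t t := by
  intro t
  induction t using ind with
  | h a cs ih =>
    exact iso_node_iff.2 ⟨rfl, rel_refl_of_mem (fun x hx => ih x (by exact_mod_cast hx))⟩

theorem Iso.symm : ∀ t t' : LTree, Iso t t' → Iso t' t := by
  intro t
  induction t using ind with
  | h a cs ih =>
    intro t' h
    cases t' with
    | node b ds =>
      rcases iso_node_iff.1 h with ⟨rfl, hrel⟩
      refine iso_node_iff.2 ⟨rfl, ?_⟩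
      rw [← Multiset.rel_flip]
      exact hrel.mono (fun x hx y _ hxy => ih x (by exact_mod_cast hx) y hxy)

theorem Iso.trans : ∀ t₁ t₂ t₃ : LTree, Iso t₁ t₂ → Iso t₂ t₃ → Iso t₁ t₃ := by
  have key : ∀ n : ℕ, ∀ t₁, nodeCount t₁ ≤ n → ∀ t₂ t₃, Iso t₁ t₂ → Iso t₂ t₃ → Iso t₁ t₃ := by
    intro n
    induction n with
    | zero => intro t₁ h; have := nodeCount_pos t₁; omega
    | succ n ih =>
      rintro ⟨a, cs⟩ hle ⟨b, ds⟩ ⟨c, es⟩ h12 h23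
      rcases iso_node_iff.1 h12 with ⟨rfl, r12⟩
      rcases iso_node_iff.1 h23 with ⟨rfl, r23⟩
      refine iso_node_iff.2 ⟨rfl, ?_⟩
      -- compose the two multiset relations
      have : ∀ (m₁ : Multiset LTree), (∀ x ∈ m₁, nodeCount x ≤ n) →
          ∀ m₂ m₃, Multiset.Rel Iso m₁ m₂ → Multiset.Rel Iso m₂ m₃ → Multiset.Rel Iso m₁ m₃ := by
        intro m₁
        induction m₁ using Multiset.induction with
        | empty =>
          intro _ m₂ m₃ h1 h2
          rw [Multiset.rel_zero_left.1 h1] at h2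
          rw [Multiset.rel_zero_left.1 h2]
          exact Multiset.Rel.zero
        | cons a s ihm =>
          intro hsz m₂ m₃ h1 h2
          rcases Multiset.rel_cons_left.1 h1 with ⟨b, bs, hab, hrel, rfl⟩
          rcases Multiset.rel_cons_left.1 h2 with ⟨c, cs', hbc, hrel', rfl⟩
          exact Multiset.Rel.cons
            (ih a (hsz a (Multiset.mem_cons_self _ _)) b c hab hbc)
            (ihm (fun x hx => hsz x (Multiset.mem_cons_of_mem hx)) _ _ hrel hrel')
      refine this ↑cs ?_ _ _ r12 r23
      intro x hx
      have := nodeCount_lt_of_mem (a := a) (by exact_mod_cast hx : x ∈ cs)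
      omega
  intro t₁ t₂ t₃
  exact key (nodeCount t₁) t₁ le_rfl t₂ t₃

theorem rel_map_eq {α β : Type*} {R : α → α → Prop} {f : α → β} {m m' : Multiset α}
    (h : Multiset.Rel R m m') (hf : ∀ x ∈ m, ∀ y, R x y → f x = f y) : m.map f = m'.map f := by
  induction h with
  | zero => rfl
  | cons hr hrel ih =>
    simp only [Multiset.map_cons]
    rw [hf _ (Multiset.mem_cons_self _ _) _ hr,
      ih (fun x hx y hy => hf x (Multiset.mem_cons_of_mem hx) y hy)]

theorem Iso.height_eq : ∀ t t' : LTree, Iso t t' → height t = height t' := by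
  have key : ∀ n, ∀ t, nodeCount t ≤ n → ∀ t', Iso t t' → height t = height t' := by
    intro n
    induction n with
    | zero => intro t h; have := nodeCount_pos t; omega
    | succ n ih =>
      rintro ⟨a, cs⟩ hle ⟨b, ds⟩ hiso
      rcases iso_node_iff.1 hiso with ⟨rfl, hrel⟩
      have hmap : (↑cs : Multiset LTree).map (fun c => height c + 1)
          = (↑ds : Multiset LTree).map (fun c => height c + 1) := by
        refine rel_map_eq hrel ?_
        intro x hx y hxy
        have hxc : x ∈ cs := by exact_mod_cast hx
        have := nodeCount_lt_of_mem (a := a) hxc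
        rw [ih x (by omega) y hxy]
      rw [Multiset.map_coe, Multiset.map_coe, Multiset.coe_eq_coe] at hmap
      rw [height_node, height_node]
      exact hmap.foldr_eq 0
  intro t t' h
  exact key (nodeCount t) t le_rfl t' h

theorem Iso.nodeCount_eq : ∀ t t' : LTree, Iso t t' → nodeCount t = nodeCount t' := by
  have key : ∀ n, ∀ t, nodeCount t ≤ n → ∀ t', Iso t t' → nodeCount t = nodeCount t' := by
    intro n
    induction n with
    | zero => intro t h; have := nodeCount_pos t; omega
    | succ n ih =>
      rintro ⟨a, cs⟩ hle ⟨b, ds⟩ hiso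
      rcases iso_node_iff.1 hiso with ⟨rfl, hrel⟩
      have hmap : (↑cs : Multiset LTree).map nodeCount
          = (↑ds : Multiset LTree).map nodeCount := by
        refine rel_map_eq hrel ?_
        intro x hx y hxy
        have hxc : x ∈ cs := by exact_mod_cast hx
        have := nodeCount_lt_of_mem (a := a) hxc
        rw [ih x (by omega) y hxy]
      rw [Multiset.map_coe, Multiset.map_coe, Multiset.coe_eq_coe] at hmap
      rw [nodeCount_node, nodeCount_node, hmap.sum_eq]
  intro t t' h
  exact key (nodeCount t) t le_rfl t' h

theorem Iso.code_eq : ∀ t t' : LTree, Iso t t' → code t = code t' := by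
  have key : ∀ n, ∀ t, nodeCount t ≤ n → ∀ t', Iso t t' → code t = code t' := by
    intro n
    induction n with
    | zero => intro t h; have := nodeCount_pos t; omega
    | succ n ih =>
      rintro ⟨a, cs⟩ hle ⟨b, ds⟩ hiso
      rcases iso_node_iff.1 hiso with ⟨rfl, hrel⟩
      have hmap : (↑cs : Multiset LTree).map code = (↑ds : Multiset LTree).map code := by
        refine rel_map_eq hrel ?_
        intro x hx y hxy
        have hxc : x ∈ cs := by exact_mod_cast hx
        have := nodeCount_lt_of_mem (a := a) hxc
        rw [ih x (by omega) y hxy]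
      rw [Multiset.map_coe, Multiset.map_coe, Multiset.coe_eq_coe] at hmap
      rw [code_node, code_node]
      congr 2
      have hperm : ((cs.map code).mergeSort (· ≤ ·)).Perm ((ds.map code).mergeSort (· ≤ ·)) :=
        ((List.mergeSort_perm _ _).trans hmap).trans (List.mergeSort_perm _ _).symm
      refine List.Perm.eq_of_pairwise' (r := (· ≤ · : ℕ → ℕ → Prop)) ?_ ?_ hperm <;>
      · have := List.pairwise_mergeSort (le := fun a b : ℕ => decide (a ≤ b))
          (fun a b c hab hbc => by simpa using le_trans (by simpa using hab) (by simpa using hbc))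
          (fun a b => by by_cases hab : a ≤ b <;> simp [hab] <;> omega)
        first
        | exact List.Pairwise.imp (fun hab => by simpa using hab) (this (cs.map code))
        | exact List.Pairwise.imp (fun hab => by simpa using hab) (this (ds.map code))
  intro t t' h
  exact key (nodeCount t) t le_rfl t' h

theorem rel_subM {F G : Multiset LTree}
    (h : Multiset.Rel Iso F G)
    (hsub : ∀ x ∈ F, ∀ y, Iso x y → Multiset.Rel Iso (subtrees x) (subtrees y)) :
    Multiset.Rel Iso (subM F) (subM G) := by
  induction h with
  | zero => exact Multiset.Rel.zero
  | cons hr hrel ih =>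
    rw [subM_cons, subM_cons]
    exact Multiset.Rel.add (hsub _ (Multiset.mem_cons_self _ _) _ hr)
      (ih (fun x hx y hy => hsub x (Multiset.mem_cons_of_mem hx) y hy))

theorem Iso.rel_subtrees : ∀ t t' : LTree, Iso t t' →
    Multiset.Rel Iso (subtrees t) (subtrees t') := by
  have key : ∀ n, ∀ t, nodeCount t ≤ n → ∀ t', Iso t t' →
      Multiset.Rel Iso (subtrees t) (subtrees t') := by
    intro n
    induction n with
    | zero => intro t h; have := nodeCount_pos t; omega
    | succ n ih =>
      rintro ⟨a, cs⟩ hle ⟨b, ds⟩ hiso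
      rcases iso_node_iff.1 hiso with ⟨rfl, hrel⟩
      rw [subtrees_node', subtrees_node']
      refine Multiset.Rel.cons hiso (rel_subM hrel ?_)
      intro x hx y hxy
      have hxc : x ∈ cs := by exact_mod_cast hx
      have := nodeCount_lt_of_mem (a := a) hxc
      exact ih x (by omega) y hxy
  intro t t' h
  exact key (nodeCount t) t le_rfl t' h

theorem Iso.bocs_eq {t t' : LTree} (h : Iso t t') : bocs t = bocs t' := by
  unfold bocs
  exact rel_map_eq (h.rel_subtrees t t') (fun x _ y hxy => Iso.code_eq x y hxy)

theorem code_inj : ∀ t t' : LTree, code t = code t' → Iso t t' := by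
  have key : ∀ n, ∀ t, nodeCount t ≤ n → ∀ t', code t = code t' → Iso t t' := by
    intro n
    induction n with
    | zero => intro t h; have := nodeCount_pos t; omega
    | succ n ih =>
      rintro ⟨a, cs⟩ hle ⟨b, ds⟩ hcode
      rw [code_node, code_node] at hcode
      rcases Nat.pair_eq_pair.1 hcode with ⟨rfl, henc⟩
      have hsort := Encodable.encode_injective henc
      have hperm : (cs.map code).Perm (ds.map code) :=
        ((List.mergeSort_perm (cs.map code) _).symm.trans (by rw [hsort])).trans
          (List.mergeSort_perm (ds.map code) _)
      refine iso_node_iff.2 ⟨rfl, ?_⟩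
      have hmeq : (↑cs : Multiset LTree).map code = (↑ds : Multiset LTree).map code := by
        rw [Multiset.map_coe, Multiset.map_coe, Multiset.coe_eq_coe]; exact hperm
      have hsz : ∀ x ∈ (↑cs : Multiset LTree), nodeCount x ≤ n := by
        intro x hx
        have hxc : x ∈ cs := by exact_mod_cast hx
        have := nodeCount_lt_of_mem (a := a) hxc
        omega
      clear hcode henc hsort hperm hle
      generalize (↑cs : Multiset LTree) = F at hmeq hsz
      generalize (↑ds : Multiset LTree) = G at hmeq
      induction F using Multiset.induction generalizing G with
      | empty =>
        simp only [Multiset.map_zero] at hmeq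
        have : G = 0 := by
          rw [eq_comm, Multiset.map_eq_zero] at hmeq; exact hmeq
        rw [this]; exact Multiset.Rel.zero
      | cons x F ihF =>
        have hx : code x ∈ Multiset.map code G := by
          rw [← hmeq]; exact Multiset.mem_map_of_mem _ (Multiset.mem_cons_self _ _)
        rcases Multiset.mem_map.1 hx with ⟨y, hy, hxy⟩
        rcases Multiset.exists_cons_of_mem hy with ⟨G', hGy⟩
        rw [hGy, Multiset.map_cons, Multiset.map_cons, ← hxy] at hmeq
        have hmeq' := (Multiset.cons_inj_right _).1 hmeq
        rw [hGy]
        exact Multiset.Rel.cons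
          (ih x (hsz x (Multiset.mem_cons_self _ _)) y hxy.symm)
          (ihF (fun z hz => hsz z (Multiset.mem_cons_of_mem hz)) _ hmeq')
  intro t t' h
  exact key (nodeCount t) t le_rfl t' h

end LTree
namespace LTree

/-! ### Edits machinery -/

theorem EditStep.symm {s s' : LTree} (h : EditStep s s') : EditStep s' s := by
  induction h with
  | relabel a b cs => exact EditStep.relabel b a cs
  | delete a b pre post ds => exact EditStep.insert a b pre post ds
  | insert a b pre post ds => exact EditStep.delete a b pre post ds
  | congr a pre post t t' _ ih => exact EditStep.congr a pre post t' t ih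

theorem Edits.iso_left {t₀ t t' : LTree} {n : ℕ} (hiso : Iso t₀ t) (h : Edits n t t') :
    Edits n t₀ t' := by
  cases h with
  | iso h => exact Edits.iso (Iso.trans _ _ _ hiso h)
  | step h1 h2 h3 => exact Edits.step (Iso.trans _ _ _ hiso h1) h2 h3

theorem Edits.iso_right {t t' t₁ : LTree} {n : ℕ} (h : Edits n t t') (hiso : Iso t' t₁) :
    Edits n t t₁ := by
  induction h with
  | iso h => exact Edits.iso (Iso.trans _ _ _ h hiso)
  | step h1 h2 _ ih => exact Edits.step h1 h2 (ih hiso)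

theorem Edits.comp {t₁ t₂ t₃ : LTree} {m n : ℕ}
    (h1 : Edits m t₁ t₂) (h2 : Edits n t₂ t₃) : Edits (m + n) t₁ t₃ := by
  induction h1 with
  | iso h => simpa using Edits.iso_left h h2
  | step ha hb _ ih =>
    rw [Nat.add_right_comm]
    exact Edits.step ha hb (ih h2)

theorem Edits.snoc {t₁ t₂ t₃ : LTree} {n : ℕ} (h : Edits n t₁ t₂) (hstep : EditStep t₂ t₃) :
    Edits (n + 1) t₁ t₃ := by
  induction h with
  | iso h => exact Edits.step h hstep (Edits.iso (Iso.refl _))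
  | step ha hb _ ih => exact Edits.step ha hb (ih hstep)

theorem Edits.symm {t t' : LTree} {n : ℕ} (h : Edits n t t') : Edits n t' t := by
  induction h with
  | iso h => exact Edits.iso (Iso.symm _ _ h)
  | step ha hb _ ih =>
    exact Edits.iso_right (Edits.snoc ih hb.symm) (Iso.symm _ _ ha)

/-- add a child in front of the root's children -/
def addChild (c : LTree) : LTree → LTree
  | node a cs => node a (c :: cs)

theorem EditStep.addChild {s s' : LTree} (c : LTree) (h : EditStep s s') :
    EditStep (addChild c s) (addChild c s') := by
  induction h with
  | relabel a b cs => exact EditStep.relabel a b (c :: cs)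
  | delete a b pre post ds =>
    have := EditStep.delete a b (c :: pre) post ds
    simpa [LTree.addChild] using this
  | insert a b pre post ds =>
    have := EditStep.insert a b (c :: pre) post ds
    simpa [LTree.addChild] using this
  | congr a pre post t t' hstep _ =>
    have := EditStep.congr a (c :: pre) post t t' hstep
    simpa [LTree.addChild] using this

theorem Iso.addChild {s s' c d : LTree} (h : Iso s s') (hcd : Iso c d) :
    Iso (addChild c s) (addChild d s') := by
  cases s with | node a cs =>
  cases s' with | node b ds =>
  rcases iso_node_iff.1 h with ⟨rfl, hrel⟩
  refine iso_node_iff.2 ⟨rfl, ?_⟩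
  simp only [← Multiset.cons_coe]
  exact Multiset.Rel.cons hcd hrel

theorem Edits.addChild {s s' c d : LTree} {n : ℕ} (h : Edits n s s') (hcd : Iso c d) :
    Edits n (addChild c s) (addChild d s') := by
  induction h generalizing c d with
  | iso h => exact Edits.iso (h.addChild hcd)
  | step ha hb _ ih =>
    exact Edits.step (ha.addChild (Iso.refl c)) (hb.addChild c) (ih hcd)

theorem iso_of_perm {a : ℕ} {cs ds : List LTree} (h : cs.Perm ds) :
    Iso (node a cs) (node a ds) :=
  Iso.node h.symm (List.forall₂_same.2 (fun x _ => Iso.refl x))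

end LTree
namespace LTree

/-! ### Cutting forests -/

def szM (F : Multiset LTree) : ℕ := (F.map nodeCount).sum

theorem szM_zero : szM 0 = 0 := rfl

theorem szM_cons (t : LTree) (F : Multiset LTree) : szM (t ::ₘ F) = nodeCount t + szM F := by
  simp [szM]

theorem szM_add (F G : Multiset LTree) : szM (F + G) = szM F + szM G := by
  simp [szM]

theorem szM_coe (l : List LTree) : szM ↑l = (l.map nodeCount).sum := by
  rw [szM, Multiset.map_coe, Multiset.sum_coe]

theorem szM_eq_card_subM (F : Multiset LTree) : szM F = Multiset.card (subM F) := by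
  induction F using Multiset.induction with
  | empty => rfl
  | cons t F ih =>
    rw [szM_cons, subM_cons, Multiset.card_add, card_subtrees, ih]

theorem szM_pos_of_mem {t : LTree} {F : Multiset LTree} (h : t ∈ F) : 0 < szM F := by
  rcases Multiset.exists_cons_of_mem h with ⟨F', rfl⟩
  rw [szM_cons]
  have := nodeCount_pos t
  omega

inductive Cut : Multiset LTree → Multiset LTree → Prop
  | zero : Cut 0 0
  | keep (t : LTree) {F C : Multiset LTree} : Cut F C → Cut (t ::ₘ F) (t ::ₘ C)
  | drop (a : ℕ) (cs : List LTree) {F C : Multiset LTree} :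
      Cut (↑cs + F) C → Cut (node a cs ::ₘ F) C

theorem Cut.size_le {F C : Multiset LTree} (h : Cut F C) : szM C ≤ szM F := by
  induction h with
  | zero => exact le_rfl
  | keep t _ ih => rw [szM_cons, szM_cons]; omega
  | drop a cs hcut ih =>
    rw [szM_add, szM_coe] at ih
    rw [szM_cons, nodeCount_node]
    omega

theorem cut_zero : ∀ (n : ℕ) (F : Multiset LTree), szM F ≤ n → Cut F 0 := by
  intro n
  induction n with
  | zero =>
    intro F hF
    rcases Multiset.empty_or_exists_mem F with rfl | ⟨t, ht⟩
    · exact Cut.zero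
    · have := szM_pos_of_mem ht; omega
  | succ n ih =>
    intro F hF
    rcases Multiset.empty_or_exists_mem F with rfl | ⟨t, ht⟩
    · exact Cut.zero
    · rcases Multiset.exists_cons_of_mem ht with ⟨F', rfl⟩
      cases t with | node a cs =>
      refine Cut.drop a cs (ih _ ?_)
      rw [szM_cons, nodeCount_node] at hF
      rw [szM_add, szM_coe]
      omega

theorem Cut.edits {F C : Multiset LTree} (h : Cut F C) :
    ∀ (a : ℕ) (L : List LTree), (↑L : Multiset LTree) = F →
      ∃ M : List LTree, (↑M : Multiset LTree) = C ∧
        Edits (szM F - szM C) (node a L) (node a M) := by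
  induction h with
  | zero =>
    intro a L hL
    have : L = [] := (Multiset.coe_eq_zero _).1 hL
    subst this
    exact ⟨[], rfl, Edits.iso (Iso.refl _)⟩
  | keep t hcut ih =>
    intro a L hL
    rename_i F C
    have htL : t ∈ L := by
      have : t ∈ (↑L : Multiset LTree) := by rw [hL]; exact Multiset.mem_cons_self _ _
      exact_mod_cast this
    rcases List.append_of_mem htL with ⟨L₁, L₂, rfl⟩
    have hperm : (L₁ ++ t :: L₂).Perm (t :: (L₁ ++ L₂)) := List.perm_middle
    have hF : (↑(L₁ ++ L₂) : Multiset LTree) = F := by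
      have h1 : (↑(L₁ ++ t :: L₂) : Multiset LTree) = ↑(t :: (L₁ ++ L₂)) :=
        Multiset.coe_eq_coe.2 hperm
      rw [h1, ← Multiset.cons_coe] at hL
      exact (Multiset.cons_inj_right _).1 hL
    rcases ih a (L₁ ++ L₂) hF with ⟨M, hM, hEdits⟩
    have hlift := hEdits.addChild (c := t) (d := t) (Iso.refl t)
    simp only [addChild] at hlift
    refine ⟨t :: M, by rw [← Multiset.cons_coe, hM], ?_⟩
    rw [szM_cons, szM_cons]
    have := hcut.size_le
    have hsz : nodeCount t + szM F - (nodeCount t + szM C) = szM F - szM C := by omega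
    rw [hsz]
    exact Edits.iso_left (iso_of_perm hperm) hlift
  | drop b cs hcut ih =>
    intro a L hL
    rename_i F C
    have htL : node b cs ∈ L := by
      have : node b cs ∈ (↑L : Multiset LTree) := by rw [hL]; exact Multiset.mem_cons_self _ _
      exact_mod_cast this
    rcases List.append_of_mem htL with ⟨L₁, L₂, rfl⟩
    have hperm : (L₁ ++ node b cs :: L₂).Perm (node b cs :: (L₁ ++ L₂)) := List.perm_middle
    have hF : (↑(L₁ ++ L₂) : Multiset LTree) = F := by
      have h1 : (↑(L₁ ++ node b cs :: L₂) : Multiset LTree) = ↑(node b cs :: (L₁ ++ L₂)) :=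
        Multiset.coe_eq_coe.2 hperm
      rw [h1, ← Multiset.cons_coe] at hL
      exact (Multiset.cons_inj_right _).1 hL
    have hcoe : (↑(cs ++ (L₁ ++ L₂)) : Multiset LTree) = ↑cs + F := by
      rw [← hF]; exact_mod_cast rfl
    rcases ih a (cs ++ (L₁ ++ L₂)) hcoe with ⟨M, hM, hEdits⟩
    refine ⟨M, hM, ?_⟩
    have hstep : EditStep (node a (node b cs :: (L₁ ++ L₂))) (node a (cs ++ (L₁ ++ L₂))) := by
      have := EditStep.delete a b [] (L₁ ++ L₂) cs
      simpa using this
    have := Edits.step (iso_of_perm hperm) hstep hEdits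
    have hsz : szM (node b cs ::ₘ F) - szM C = szM (↑cs + F) - szM C + 1 := by
      have h1 := hcut.size_le
      rw [szM_cons, nodeCount_node, szM_add, szM_coe] at *
      omega
    rw [hsz]
    exact this

theorem dissectF : ∀ (n : ℕ) (F : Multiset LTree), szM F ≤ n → ∀ s ∈ subM F,
    ∃ G A : Multiset LTree, subM F = A + subtrees s + subM G ∧
      (∀ x ∈ A, nodeCount s < nodeCount x) ∧ (∀ C, Cut G C → Cut F (s ::ₘ C)) := by
  intro n
  induction n with
  | zero =>
    intro F hF s hs
    rcases mem_subM.1 hs with ⟨t, ht, _⟩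
    have := szM_pos_of_mem ht; omega
  | succ n ih =>
    intro F hF s hs
    rcases mem_subM.1 hs with ⟨t, ht, hst⟩
    rcases Multiset.exists_cons_of_mem ht with ⟨F₀, rfl⟩
    cases t with | node b cs =>
    rw [subtrees_node'] at hst
    rcases Multiset.mem_cons.1 hst with rfl | hst
    · refine ⟨F₀, 0, by rw [subM_cons, subtrees_node', zero_add], by simp, ?_⟩
      intro C hC
      exact Cut.keep _ hC
    · have hsz : szM (↑cs + F₀) ≤ n := by
        rw [szM_cons, nodeCount_node] at hF
        rw [szM_add, szM_coe]
        omega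
      have hmem : s ∈ subM (↑cs + F₀) := by
        rw [subM_add]
        exact Multiset.mem_add.2 (Or.inl hst)
      rcases ih (↑cs + F₀) hsz s hmem with ⟨G, A, heq, hA, hcut⟩
      refine ⟨G, node b cs ::ₘ A, ?_, ?_, ?_⟩
      · have hstep : subM (node b cs ::ₘ F₀) = node b cs ::ₘ subM (↑cs + F₀) := by
          rw [subM_cons, subtrees_node', subM_add, Multiset.cons_add]
        rw [hstep, heq, Multiset.cons_add, Multiset.cons_add]
      · intro x hx
        rcases Multiset.mem_cons.1 hx with rfl | hx
        · rcases mem_subM.1 hst with ⟨c, hc, hsc⟩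
          have h1 := nodeCount_le_of_mem_subtrees c s hsc
          have h2 := nodeCount_lt_of_mem (a := b) (by exact_mod_cast hc : c ∈ cs)
          omega
        · exact hA x hx
      · intro C hC
        exact Cut.drop b cs (hcut C hC)

end LTree
namespace LTree

/-! ### Common cut forests -/

noncomputable local instance : DecidableEq LTree := Classical.decEq _


def bocsM (F : Multiset LTree) : Multiset ℕ := (subM F).map code

theorem card_bocs (t : LTree) : Multiset.card (bocs t) = nodeCount t := by
  rw [bocs, Multiset.card_map, card_subtrees]

theorem common_cut : ∀ (n : ℕ) (F G : Multiset LTree), szM F + szM G ≤ n →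
    ∃ C C' : Multiset LTree, Cut F C ∧ Cut G C' ∧ Multiset.Rel Iso C C' ∧
      Multiset.card (bocsM F ∩ bocsM G) ≤ szM C := by
  intro n
  induction n with
  | zero =>
    intro F G hle
    refine ⟨0, 0, cut_zero 0 F (by omega), cut_zero 0 G (by omega), Multiset.Rel.zero, ?_⟩
    have hF : szM F = 0 := by omega
    have : bocsM F = 0 := by
      rw [bocsM]
      rw [szM_eq_card_subM] at hF
      rw [Multiset.card_eq_zero.1 hF]
      rfl
    simp [this]
  | succ n ih =>
    intro F G hle
    by_cases h0 : bocsM F ∩ bocsM G = 0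
    · exact ⟨0, 0, cut_zero _ F le_rfl, cut_zero _ G le_rfl, Multiset.Rel.zero, by simp [h0]⟩
    rcases Multiset.exists_mem_of_ne_zero h0 with ⟨z, hz⟩
    have hzF : z ∈ bocsM F := Multiset.mem_inter.1 hz |>.1
    have hzG : z ∈ bocsM G := Multiset.mem_inter.1 hz |>.2
    rcases Multiset.mem_map.1 hzF with ⟨s₀, hs₀, hcs₀⟩
    -- choose a common element of maximal nodeCount
    have hSne : (Finset.filter (fun x => code x ∈ bocsM G) (subM F).toFinset).Nonempty :=
      ⟨s₀, Finset.mem_filter.2 ⟨Multiset.mem_toFinset.2 hs₀, by rw [hcs₀]; exact hzG⟩⟩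
    rcases Finset.exists_max_image _ nodeCount hSne with ⟨s, hsS, hmax⟩
    rcases Finset.mem_filter.1 hsS with ⟨hsF', hsG'⟩
    have hsF : s ∈ subM F := Multiset.mem_toFinset.1 hsF'
    rcases Multiset.mem_map.1 hsG' with ⟨s', hs'G, hcs'⟩
    have hiso : Iso s s' := Iso.symm _ _ (code_inj s' s hcs')
    -- dissect both forests
    rcases dissectF (szM F) F le_rfl s hsF with ⟨F₁, A, heqF, hA, hcutF⟩
    rcases dissectF (szM G) G le_rfl s' hs'G with ⟨G₁, A', heqG, hA', hcutG⟩
    -- sizes decrease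
    have hsub : ∀ x ∈ A, x ∈ subM F := by
      intro x hx; rw [heqF]; exact Multiset.mem_add.2 (Or.inl (Multiset.mem_add.2 (Or.inl hx)))
    have hsub' : ∀ x ∈ A', x ∈ subM G := by
      intro x hx; rw [heqG]; exact Multiset.mem_add.2 (Or.inl (Multiset.mem_add.2 (Or.inl hx)))
    have hszF : szM F = Multiset.card A + nodeCount s + szM F₁ := by
      rw [szM_eq_card_subM, heqF, Multiset.card_add, Multiset.card_add, card_subtrees,
        szM_eq_card_subM]
    have hszG : szM G = Multiset.card A' + nodeCount s' + szM G₁ := by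
      rw [szM_eq_card_subM, heqG, Multiset.card_add, Multiset.card_add, card_subtrees,
        szM_eq_card_subM]
    have hposs := nodeCount_pos s
    have hposs' := nodeCount_pos s'
    rcases ih F₁ G₁ (by omega) with ⟨C₁, C₁', hcut₁, hcut₁', hrel₁, hk₁⟩
    -- the key counting argument
    have hbF : bocsM F = A.map code + bocs s + bocsM F₁ := by
      rw [bocsM, heqF, Multiset.map_add, Multiset.map_add, bocs, bocsM]
    have hbG : bocsM G = A'.map code + bocs s + bocsM G₁ := by
      rw [bocsM, heqG, Multiset.map_add, Multiset.map_add, ← bocs, bocsM, hiso.bocs_eq]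
    have hcount : bocsM F ∩ bocsM G ≤ bocs s + (bocsM F₁ ∩ bocsM G₁) := by
      rw [Multiset.le_iff_count]
      intro w
      rw [Multiset.count_inter, Multiset.count_add, Multiset.count_inter, hbF, hbG]
      simp only [Multiset.count_add]
      by_cases hwA : 0 < Multiset.count w (A.map code)
      · -- w is the code of an ancestor on the F side: not in bocsM G
        have : Multiset.count w (bocsM G) = 0 := by
          rw [Multiset.count_eq_zero]
          intro hwG
          rcases Multiset.mem_map.1 (Multiset.count_pos.1 hwA) with ⟨x, hxA, hxw⟩
          have hxmax := hmax x (Finset.mem_filter.2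
            ⟨Multiset.mem_toFinset.2 (hsub x hxA), by rw [hxw]; exact hwG⟩)
          have := hA x hxA
          omega
        rw [hbG] at this
        simp only [Multiset.count_add] at this
        omega
      · by_cases hwA' : 0 < Multiset.count w (A'.map code)
        · -- w is the code of an ancestor on the G side: not in bocsM F
          have : Multiset.count w (bocsM F) = 0 := by
            rw [Multiset.count_eq_zero]
            intro hwF
            rcases Multiset.mem_map.1 (Multiset.count_pos.1 hwA') with ⟨x, hxA, hxw⟩
            rcases Multiset.mem_map.1 hwF with ⟨y, hyF, hyw⟩
            have hisoyx : Iso y x := code_inj y x (by rw [hyw, hxw])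
            have hymax := hmax y (Finset.mem_filter.2
              ⟨Multiset.mem_toFinset.2 hyF, by
                rw [hyw, ← hxw]
                exact Multiset.mem_map_of_mem _ (hsub' x hxA)⟩)
            have h1 := hA' x hxA
            have h2 := Iso.nodeCount_eq _ _ hisoyx
            have h3 := Iso.nodeCount_eq _ _ hiso
            omega
          rw [hbF] at this
          simp only [Multiset.count_add] at this
          omega
        · omega
    refine ⟨s ::ₘ C₁, s' ::ₘ C₁', hcutF _ hcut₁, hcutG _ hcut₁', Multiset.Rel.cons hiso hrel₁, ?_⟩
    have := Multiset.card_le_card hcount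
    rw [Multiset.card_add, card_bocs] at this
    rw [szM_cons]
    omega

end LTree
namespace LTree

/-! ### dphi arithmetic -/

theorem sum_count_eq_card {m : Multiset ℕ} {s : Finset ℕ} (h : m.toFinset ⊆ s) :
    ∑ z ∈ s, m.count z = Multiset.card m := by
  rw [← Multiset.toFinset_sum_count_eq m]
  exact (Finset.sum_subset h (fun z _ hz => Multiset.count_eq_zero.2
    (fun hmem => hz (Multiset.mem_toFinset.2 hmem)))).symm

theorem dphi_eq (T T' : LTree) :
    dphi T T' = Multiset.card (bocs T - bocs T') + Multiset.card (bocs T' - bocs T) := by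
  rw [dphi, Finset.sum_add_distrib]
  congr 1
  · rw [← sum_count_eq_card (m := bocs T - bocs T') (s := (bocs T + bocs T').toFinset)]
    · exact Finset.sum_congr rfl (fun z _ => (Multiset.count_sub _ _ _).symm)
    · intro z hz
      rw [Multiset.mem_toFinset] at *
      exact Multiset.mem_add.2 (Or.inl (Multiset.mem_of_le (Multiset.sub_le_self _ _) hz))
  · rw [← sum_count_eq_card (m := bocs T' - bocs T) (s := (bocs T + bocs T').toFinset)]
    · exact Finset.sum_congr rfl (fun z _ => (Multiset.count_sub _ _ _).symm)
    · intro z hz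
      rw [Multiset.mem_toFinset] at *
      exact Multiset.mem_add.2 (Or.inr (Multiset.mem_of_le (Multiset.sub_le_self _ _) hz))

theorem card_sub_add_card_inter (m n : Multiset ℕ) :
    Multiset.card (m - n) + Multiset.card (m ∩ n) = Multiset.card m := by
  rw [← Multiset.card_add]
  congr 1
  ext z
  rw [Multiset.count_add, Multiset.count_sub, Multiset.count_inter]
  omega

theorem szM_eq_of_rel {C C' : Multiset LTree} (h : Multiset.Rel Iso C C') : szM C = szM C' := by
  rw [szM, szM, rel_map_eq h (fun x _ y hxy => Iso.nodeCount_eq x y hxy)]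

theorem bocs_eq_cons (a : ℕ) (cs : List LTree) :
    bocs (node a cs) = code (node a cs) ::ₘ bocsM ↑cs := by
  rw [bocs, subtrees_node', Multiset.map_cons, bocsM]

/-- Main upper bound construction -/
theorem exists_edits_le_dphi (h : ℕ) (T1 T2 : LTree)
    (h1 : T1.height = h) (h2 : T2.height = h) :
    ∃ n, Edits n T1 T2 ∧ n ≤ dphi T1 T2 := by
  by_cases hiso : Iso T1 T2
  · exact ⟨0, Edits.iso hiso, Nat.zero_le _⟩
  cases T1 with | node a cs =>
  cases T2 with | node b ds =>
  have hcode : code (node a cs) ≠ code (node b ds) := fun hc => hiso (code_inj _ _ hc)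
  -- the codes of the roots appear only once / not at all
  have hroot1 : ∀ x ∈ subM (↑ds : Multiset LTree), code x ≠ code (node a cs) := by
    intro x hx hc
    have hx1 : Iso x (node a cs) := code_inj _ _ hc
    rcases mem_subM.1 hx with ⟨d, hd, hxd⟩
    have hhd : height d < height (node b ds) := height_lt_of_mem (by exact_mod_cast hd)
    have := height_le_of_mem_subtrees d x hxd
    have := Iso.height_eq _ _ hx1
    omega
  have hroot2 : ∀ x ∈ subM (↑cs : Multiset LTree), code x ≠ code (node b ds) := by
    intro x hx hc
    have hx1 : Iso x (node b ds) := code_inj _ _ hc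
    rcases mem_subM.1 hx with ⟨c, hcc, hxc⟩
    have hhd : height c < height (node a cs) := height_lt_of_mem (by exact_mod_cast hcc)
    have := height_le_of_mem_subtrees c x hxc
    have := Iso.height_eq _ _ hx1
    omega
  have hcnt1 : Multiset.count (code (node a cs)) (bocsM (↑ds : Multiset LTree)) = 0 := by
    rw [Multiset.count_eq_zero]
    intro hmem
    rcases Multiset.mem_map.1 hmem with ⟨x, hx, hxc⟩
    exact hroot1 x hx hxc
  have hcnt2 : Multiset.count (code (node b ds)) (bocsM (↑cs : Multiset LTree)) = 0 := by
    rw [Multiset.count_eq_zero]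
    intro hmem
    rcases Multiset.mem_map.1 hmem with ⟨x, hx, hxc⟩
    exact hroot2 x hx hxc
  have hcnt1' : Multiset.count (code (node b ds)) (bocsM (↑ds : Multiset LTree))
      = Multiset.count (code (node b ds)) (bocs (node b ds)) - 1 := by
    rw [bocs_eq_cons, Multiset.count_cons_self]
    omega
  -- intersection of the bags equals intersection of the children bags
  have hKeq : bocs (node a cs) ∩ bocs (node b ds)
      = bocsM (↑cs : Multiset LTree) ∩ bocsM (↑ds : Multiset LTree) := by
    ext z
    rw [Multiset.count_inter, Multiset.count_inter, bocs_eq_cons, bocs_eq_cons,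
      Multiset.count_cons, Multiset.count_cons]
    by_cases hz1 : z = code (node a cs)
    · subst hz1
      have : ¬ (code (node a cs) = code (node b ds)) := hcode
      simp only [this, if_true, if_false]
      omega
    · by_cases hz2 : z = code (node b ds)
      · subst hz2
        have : ¬ (code (node b ds) = code (node a cs)) := fun hc => hcode hc.symm
        simp only [this, if_true, if_false]
        omega
      · simp only [hz1, hz2, if_false]
        omega
  -- find common cut forests
  rcases common_cut (szM (↑cs : Multiset LTree) + szM (↑ds : Multiset LTree)) ↑cs ↑ds le_rfl
    with ⟨C, C', hcutF, hcutG, hrel, hk⟩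
  rcases hcutF.edits a cs rfl with ⟨M, hM, E1⟩
  rcases hcutG.edits b ds rfl with ⟨M', hM', E2⟩
  have E1' : Edits (szM (↑cs : Multiset LTree) - szM C + 1) (node a cs) (node b M) :=
    E1.snoc (EditStep.relabel a b M)
  have hmid : Iso (node b M) (node b M') := by
    refine iso_node_iff.2 ⟨rfl, ?_⟩
    rw [hM, hM']
    exact hrel
  have E3 : Edits (szM (↑cs : Multiset LTree) - szM C + 1 + (szM (↑ds : Multiset LTree) - szM C'))
      (node a cs) (node b ds) :=
    (E1'.iso_right hmid).comp E2.symm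
  refine ⟨_, E3, ?_⟩
  -- arithmetic
  have hszC : szM C = szM C' := szM_eq_of_rel hrel
  have hle1 : szM C ≤ szM (↑cs : Multiset LTree) := hcutF.size_le
  have hle2 : szM C' ≤ szM (↑ds : Multiset LTree) := hcutG.size_le
  rw [dphi_eq]
  have hc1 := card_sub_add_card_inter (bocs (node a cs)) (bocs (node b ds))
  have hc2 := card_sub_add_card_inter (bocs (node b ds)) (bocs (node a cs))
  rw [Multiset.inter_comm] at hc2
  rw [hKeq] at hc1 hc2
  have hcard1 : Multiset.card (bocs (node a cs)) = 1 + szM (↑cs : Multiset LTree) := by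
    rw [card_bocs, nodeCount_node, szM_coe]
  have hcard2 : Multiset.card (bocs (node b ds)) = 1 + szM (↑ds : Multiset LTree) := by
    rw [card_bocs, nodeCount_node, szM_coe]
  omega

end LTree
namespace LTree

/-! ### Lower bound machinery -/

/-- bag of subtrees of height at most `h` -/
def sb (h : ℕ) (t : LTree) : Multiset ℕ :=
  ((subtrees t).filter (fun s => height s ≤ h)).map code

theorem cons_eq_add (a : LTree) (m : Multiset LTree) : a ::ₘ m = m + ↑[a] := by
  rw [← Multiset.singleton_add, add_comm]
  rfl

theorem sb_eq_bocs {h : ℕ} {t : LTree} (ht : height t ≤ h) : sb h t = bocs t := by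
  rw [sb, bocs, Multiset.filter_eq_self.2]
  intro x hx
  exact le_trans (height_le_of_mem_subtrees t x hx) ht

theorem sb_eq_of_iso (h : ℕ) {t t' : LTree} (hiso : Iso t t') : sb h t = sb h t' := by
  rw [sb, sb]
  have hrel := hiso.rel_subtrees t t'
  generalize (subtrees t) = m at hrel
  generalize (subtrees t') = m' at hrel
  induction hrel with
  | zero => rfl
  | cons hr hrel ih =>
    rename_i x y _ _
    have hh : height x = height y := Iso.height_eq _ _ hr
    rw [Multiset.filter_cons, Multiset.filter_cons]
    by_cases hx : height x ≤ h
    · rw [if_pos hx, if_pos (by omega)]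
      simp only [Multiset.map_add, Multiset.map_singleton, ih]
      rw [Iso.code_eq _ _ hr]
    · rw [if_neg hx, if_neg (by omega)]
      simpa using ih

theorem step_decomp {s s' : LTree} (hstep : EditStep s s') :
    ∃ (C : Multiset LTree) (l l' : List LTree),
      subtrees s = C + ↑l ∧ subtrees s' = C + ↑l' ∧
      l.head? = some s ∧ l'.head? = some s' ∧
      l.Chain' (fun x y => height y < height x) ∧
      l'.Chain' (fun x y => height y < height x) := by
  induction hstep with
  | relabel a b cs =>
    refine ⟨subM ↑cs, [node a cs], [node b cs], ?_, ?_, rfl, rfl, ?_, ?_⟩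
    · rw [subtrees_node', cons_eq_add]
    · rw [subtrees_node', cons_eq_add]
    · exact List.isChain_singleton _
    · exact List.isChain_singleton _
  | delete a b pre post ds =>
    refine ⟨subM ↑pre + subM ↑ds + subM ↑post,
      [node a (pre ++ node b ds :: post), node b ds],
      [node a (pre ++ ds ++ post)], ?_, ?_, rfl, rfl, ?_, ?_⟩
    · rw [subtrees_node']
      have : (↑(pre ++ node b ds :: post) : Multiset LTree) = ↑pre + (node b ds ::ₘ ↑post) := by
        simp
      rw [this, subM_add, subM_cons, subtrees_node']
      rw [cons_eq_add, cons_eq_add]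
      have : (↑[node a (pre ++ node b ds :: post), node b ds] : Multiset LTree)
          = ↑[node a (pre ++ node b ds :: post)] + ↑[node b ds] := rfl
      rw [this]
      abel
    · rw [subtrees_node']
      have : (↑(pre ++ ds ++ post) : Multiset LTree) = ↑pre + ↑ds + ↑post := by simp
      rw [this, subM_add, subM_add, cons_eq_add]
    · refine List.isChain_cons_cons.2 ⟨?_, List.isChain_singleton _⟩
      exact height_lt_of_mem (by simp)
    · exact List.isChain_singleton _
  | insert a b pre post ds =>
    refine ⟨subM ↑pre + subM ↑ds + subM ↑post,
      [node a (pre ++ ds ++ post)],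
      [node a (pre ++ node b ds :: post), node b ds], ?_, ?_, rfl, rfl, ?_, ?_⟩
    · rw [subtrees_node']
      have : (↑(pre ++ ds ++ post) : Multiset LTree) = ↑pre + ↑ds + ↑post := by simp
      rw [this, subM_add, subM_add, cons_eq_add]
    · rw [subtrees_node']
      have : (↑(pre ++ node b ds :: post) : Multiset LTree) = ↑pre + (node b ds ::ₘ ↑post) := by
        simp
      rw [this, subM_add, subM_cons, subtrees_node']
      rw [cons_eq_add, cons_eq_add]
      have : (↑[node a (pre ++ node b ds :: post), node b ds] : Multiset LTree)
          = ↑[node a (pre ++ node b ds :: post)] + ↑[node b ds] := rfl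
      rw [this]
      abel
    · exact List.isChain_singleton _
    · refine List.isChain_cons_cons.2 ⟨?_, List.isChain_singleton _⟩
      exact height_lt_of_mem (by simp)
  | congr a pre post t t' hst ih =>
    rcases ih with ⟨C₀, l₀, l₀', he, he', hh, hh', hc, hc'⟩
    refine ⟨subM ↑pre + C₀ + subM ↑post,
      node a (pre ++ t :: post) :: l₀,
      node a (pre ++ t' :: post) :: l₀', ?_, ?_, rfl, rfl, ?_, ?_⟩
    · rw [subtrees_node']
      have : (↑(pre ++ t :: post) : Multiset LTree) = ↑pre + (t ::ₘ ↑post) := by simp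
      rw [this, subM_add, subM_cons, he, cons_eq_add]
      have : (↑(node a (pre ++ t :: post) :: l₀) : Multiset LTree)
          = ↑l₀ + ↑[node a (pre ++ t :: post)] := by
        rw [← Multiset.cons_coe, cons_eq_add]
      rw [this]
      abel
    · rw [subtrees_node']
      have : (↑(pre ++ t' :: post) : Multiset LTree) = ↑pre + (t' ::ₘ ↑post) := by simp
      rw [this, subM_add, subM_cons, he', cons_eq_add]
      have : (↑(node a (pre ++ t' :: post) :: l₀') : Multiset LTree)
          = ↑l₀' + ↑[node a (pre ++ t' :: post)] := by
        rw [← Multiset.cons_coe, cons_eq_add]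
      rw [this]
      abel
    · refine List.isChain_cons.2 ⟨?_, hc⟩
      intro y hy
      rw [hh] at hy
      cases hy
      exact height_lt_of_mem (by simp)
    · refine List.isChain_cons.2 ⟨?_, hc'⟩
      intro y hy
      rw [hh'] at hy
      cases hy
      exact height_lt_of_mem (by simp)

theorem pairwise_card_le (h : ℕ) : ∀ (L : List ℕ), L.Pairwise (fun x y => y < x) →
    (∀ x ∈ L, x ≤ h) → L.length ≤ h + 1 := by
  intro L
  induction L generalizing h with
  | nil => intro _ _; simp
  | cons x xs ih =>
    intro hp hb
    have hx : x ≤ h := hb x (by simp)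
    have h1 : ∀ y ∈ xs, y < x := fun y hy => (List.pairwise_cons.1 hp).1 y hy
    have h2 : xs.length ≤ x := by
      cases xs with
      | nil => simp
      | cons y ys =>
        have hyx : y < x := h1 y (by simp)
        have := ih (h := x - 1) (List.pairwise_cons.1 hp).2 (by
          intro z hz
          have := h1 z hz
          omega)
        omega
    simp only [List.length_cons]
    omega

theorem chain_card_le (h : ℕ) (l : List LTree)
    (hch : l.Chain' (fun x y => height y < height x)) :
    (l.filter (fun x => decide (height x ≤ h))).length ≤ h + 1 := by
  haveI : IsTrans LTree (fun x y => height y < height x) :=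
    ⟨fun a b c h1 h2 => lt_trans h2 h1⟩
  have hp : l.Pairwise (fun x y => height y < height x) := List.isChain_iff_pairwise.1 hch
  have hp2 := hp.filter (fun x => decide (height x ≤ h))
  have hp3 : ((l.filter (fun x => decide (height x ≤ h))).map height).Pairwise
      (fun x y => y < x) := List.Pairwise.map _ (fun a b hab => hab) hp2
  have hb : ∀ x ∈ (l.filter (fun x => decide (height x ≤ h))).map height, x ≤ h := by
    intro x hx
    rcases List.mem_map.1 hx with ⟨y, hy, rfl⟩
    have := List.of_mem_filter hy
    simpa using this
  have := pairwise_card_le h _ hp3 hb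
  simpa using this

theorem card_sb_filter_le (h : ℕ) (l : List LTree)
    (hch : l.Chain' (fun x y => height y < height x)) :
    Multiset.card ((Multiset.filter (fun s => height s ≤ h) ↑l).map code) ≤ h + 1 := by
  rw [Multiset.card_map, Multiset.filter_coe, Multiset.coe_card]
  exact chain_card_le h l hch

theorem step_sb_le (h : ℕ) {s s' : LTree} (hstep : EditStep s s') :
    Multiset.card (sb h s - sb h s') + Multiset.card (sb h s' - sb h s) ≤ 2 * h + 2 := by
  rcases step_decomp hstep with ⟨C, l, l', he, he', _, _, hc, hc'⟩
  have hsb : sb h s = ((Multiset.filter (fun s => height s ≤ h) C).map code)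
      + ((Multiset.filter (fun s => height s ≤ h) ↑l).map code) := by
    rw [sb, he, Multiset.filter_add, Multiset.map_add]
  have hsb' : sb h s' = ((Multiset.filter (fun s => height s ≤ h) C).map code)
      + ((Multiset.filter (fun s => height s ≤ h) ↑l').map code) := by
    rw [sb, he', Multiset.filter_add, Multiset.map_add]
  rw [hsb, hsb', add_tsub_add_eq_tsub_left, add_tsub_add_eq_tsub_left]
  have b1 := Multiset.card_le_card (Multiset.sub_le_self
    ((Multiset.filter (fun s => height s ≤ h) ↑l).map code)
    ((Multiset.filter (fun s => height s ≤ h) ↑l').map code))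
  have b2 := Multiset.card_le_card (Multiset.sub_le_self
    ((Multiset.filter (fun s => height s ≤ h) ↑l').map code)
    ((Multiset.filter (fun s => height s ≤ h) ↑l).map code))
  have c1 := card_sb_filter_le h l hc
  have c2 := card_sb_filter_le h l' hc'
  omega

theorem sub_triangle (m₁ m₂ m₃ : Multiset ℕ) : m₁ - m₃ ≤ (m₁ - m₂) + (m₂ - m₃) := by
  rw [Multiset.le_iff_count]
  intro z
  rw [Multiset.count_add, Multiset.count_sub, Multiset.count_sub, Multiset.count_sub]
  omega

theorem edits_sb_le (h : ℕ) : ∀ {n : ℕ} {t t' : LTree}, Edits n t t' →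
    Multiset.card (sb h t - sb h t') + Multiset.card (sb h t' - sb h t) ≤ (2 * h + 2) * n := by
  intro n t t' hed
  induction hed with
  | iso hiso =>
    rw [sb_eq_of_iso h hiso]
    simp
  | @step n t s s' t' ha hb hrest ih =>
    have hts : sb h t = sb h s := sb_eq_of_iso h ha
    have hstep := step_sb_le h hb
    have tri1 := Multiset.card_le_card (sub_triangle (sb h t) (sb h s') (sb h t'))
    have tri2 := Multiset.card_le_card (sub_triangle (sb h t') (sb h s') (sb h t))
    rw [Multiset.card_add] at tri1 tri2
    rw [hts] at *
    have : (2 * h + 2) * (n + 1) = (2 * h + 2) + (2 * h + 2) * n := by ring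
    omega

end LTree

open LTree in
theorem dphi_le_ted_le_dphi (h : ℕ) (T1 T2 : LTree)
    (h1 : T1.height = h) (h2 : T2.height = h) :
    (dphi T1 T2 : ℝ) / (2 * h + 2) ≤ (dTED T1 T2 : ℝ) ∧
      (dTED T1 T2 : ℝ) ≤ (dphi T1 T2 : ℝ) := by
  rcases exists_edits_le_dphi h T1 T2 h1 h2 with ⟨n₀, hed₀, hle₀⟩
  have hne : {n | Edits n T1 T2}.Nonempty := ⟨n₀, hed₀⟩
  have hub : dTED T1 T2 ≤ n₀ := Nat.sInf_le hed₀
  have hmem : Edits (dTED T1 T2) T1 T2 := Nat.sInf_mem hne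
  have hdphi : dphi T1 T2 ≤ (2 * h + 2) * dTED T1 T2 := by
    have := edits_sb_le h hmem
    rwa [sb_eq_bocs (le_of_eq h1), sb_eq_bocs (le_of_eq h2), ← dphi_eq] at this
  constructor
  · rw [div_le_iff₀ (by positivity)]
    have : (dphi T1 T2 : ℝ) ≤ ((2 * h + 2) * dTED T1 T2 : ℕ) := by exact_mod_cast hdphi
    calc (dphi T1 T2 : ℝ) ≤ ((2 * h + 2) * dTED T1 T2 : ℕ) := this
      _ = (dTED T1 T2 : ℝ) * (2 * h + 2) := by push_cast; ring
  · exact_mod_cast le_trans hub hle₀
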